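/- Let C ⊆ F_q^n be a linear code of dimension k. For 0 ≤ j ≤ k, 0 ≤ r ≤ n, let β̂_j(C,r) be the number of r-subsets S with dim(C(S)) = j, and let W_ℓ(D) be the number of codewords of Hamming weight ℓ in a code D. Then for every m ≥ 0: sum_{j=0}^{k} q^{jm} β̂_j(C,r) = sum_{ℓ=0}^{n} binom(n−ℓ, r−ℓ) W_ℓ(C ⊗_{F_q} F_{q^m}). -/

import Mathlib

/-- Gaussian binomial coefficient as a polynomial in `q`, evaluated at an integer. -/
def qb (q : ℤ) : ℕ → ℕ → ℤ
  | _, 0 => 1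
  | 0, _+1 => 0
  | n+1, k+1 => qb q n k + q ^ (k+1) * qb q n (k+1)

/-- Hamming weight of a vector. -/
noncomputable def hamWt {R : Type*} [Zero R] {n : ℕ} (x : Fin n → R) : ℕ :=
  Nat.card {i : Fin n // x i ≠ 0}

/-- The `n`-th harmonic number. -/
noncomputable def harm (n : ℕ) : ℝ := ∑ i ∈ Finset.range n, (1 : ℝ) / (i + 1)

/-- Expected number of i.i.d. uniform draws of columns of `G` (with replacement)
until the drawn columns span `F^k`, written as `∑_{t≥0} P(T > t)`. -/
noncomputable def coverDepth {F : Type*} [Field F] {k n : ℕ}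
    (G : Matrix (Fin k) (Fin n) F) : ℝ :=
  ∑' t : ℕ, (Nat.card {f : Fin t → Fin n //
      Submodule.span F (Set.range fun i => fun r => G r (f i)) ≠ ⊤} : ℝ) / (n : ℝ) ^ t

/-- Vectors whose support is contained in the finite set `S`. -/
def zeroOutside (F : Type*) [Field F] (n : ℕ) (S : Finset (Fin n)) :
    Submodule F (Fin n → F) where
  carrier := {x | ∀ i ∉ S, x i = 0}
  add_mem' := by intro a b ha hb i hi; simp [ha i hi, hb i hi]
  zero_mem' := by intro i hi; rfl
  smul_mem' := by intro c a ha i hi; simp [ha i hi]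

/-- The dual code with respect to the standard bilinear form. -/
def dualCode (F : Type*) [Field F] (n : ℕ) (C : Submodule F (Fin n → F)) :
    Submodule F (Fin n → F) where
  carrier := {y | ∀ x ∈ C, ∑ i, x i * y i = 0}
  add_mem' := by
    intro a b ha hb x hx
    simp only [Pi.add_apply, mul_add, Finset.sum_add_distrib, ha x hx, hb x hx, add_zero]
  zero_mem' := by intro x hx; simp
  smul_mem' := by
    intro c a ha x hx
    simp only [Pi.smul_apply, smul_eq_mul, mul_left_comm, ← Finset.mul_sum, ha x hx, mul_zero]

/-- Projection onto the coordinates indexed by `S`. -/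
def projS (F : Type*) [Field F] {n : ℕ} (S : Finset (Fin n)) :
    (Fin n → F) →ₗ[F] ({x // x ∈ S} → F) :=
  LinearMap.funLeft F F (fun i => (i : Fin n))

/-- The extension code of `C` over an extension field `E`. -/
def extCode {F E : Type*} [Field F] [Field E] [Algebra F E] {n : ℕ}
    (C : Submodule F (Fin n → F)) : Submodule E (Fin n → E) :=
  Submodule.span E ((fun c : Fin n → F => fun i => algebraMap F E (c i)) '' C)

section Aux
open Finset
variable {F E : Type*} [Field F] [Field E] [Algebra F E] {n m : ℕ}

noncomputable def psi (e : Module.Basis (Fin m) F E) (D : Submodule F (Fin n → F))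
    (c : Fin m → D) : Fin n → E :=
  fun i => ∑ t, ((c t : Fin n → F) i) • e t

lemma psi_mem (e : Module.Basis (Fin m) F E) (D : Submodule F (Fin n → F)) (c : Fin m → D) :
    psi e D c ∈ extCode D := by
  have : psi e D c = ∑ t, e t • (fun i => algebraMap F E ((c t : Fin n → F) i)) := by
    funext i
    simp only [psi, Finset.sum_apply, Pi.smul_apply, smul_eq_mul, Algebra.smul_def]
    exact Finset.sum_congr rfl fun t _ => mul_comm _ _
  rw [this]
  exact Submodule.sum_mem _ fun t _ => Submodule.smul_mem _ _
    (Submodule.subset_span ⟨_, (c t).2, rfl⟩)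

lemma psi_apply_eq_zero_iff (e : Module.Basis (Fin m) F E) (D : Submodule F (Fin n → F))
    (c : Fin m → D) (i : Fin n) :
    psi e D c i = 0 ↔ ∀ t, (c t : Fin n → F) i = 0 := by
  constructor
  · intro h t
    exact Fintype.linearIndependent_iff.mp e.linearIndependent _ h t
  · intro h
    simp [psi, h]

lemma psi_inj (e : Module.Basis (Fin m) F E) (D : Submodule F (Fin n → F)) :
    Function.Injective (psi e D) := by
  intro c c' h
  funext t
  ext i
  have h0 : ∑ s, ((c s : Fin n → F) i - (c' s : Fin n → F) i) • e s = 0 := by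
    simp only [sub_smul, Finset.sum_sub_distrib]
    rw [sub_eq_zero]
    exact congrFun h i
  exact sub_eq_zero.mp (Fintype.linearIndependent_iff.mp e.linearIndependent _ h0 t)

lemma exists_psi (e : Module.Basis (Fin m) F E) (D : Submodule F (Fin n → F)) {x : Fin n → E}
    (hx : x ∈ extCode D) : ∃ c : Fin m → D, psi e D c = x := by
  let R : Submodule E (Fin n → E) :=
    { carrier := Set.range (psi e D)
      add_mem' := by
        rintro a b ⟨c, rfl⟩ ⟨c', rfl⟩
        exact ⟨c + c', by funext i; simp [psi, add_smul, Finset.sum_add_distrib]⟩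
      zero_mem' := ⟨0, by funext i; simp [psi]⟩
      smul_mem' := by
        rintro a x ⟨c, rfl⟩
        refine ⟨fun t => ∑ s, e.repr (a * e s) t • c s, ?_⟩
        funext i
        simp only [psi, Pi.smul_apply, smul_eq_mul, AddSubmonoidClass.coe_finset_sum,
          SetLike.val_smul, Finset.sum_apply, Pi.smul_apply, smul_eq_mul]
        calc ∑ t, (∑ s, e.repr (a * e s) t * (c s : Fin n → F) i) • e t
            = ∑ t, ∑ s, ((c s : Fin n → F) i) • (e.repr (a * e s) t • e t) := by
              refine Finset.sum_congr rfl fun t _ => ?_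
              rw [Finset.sum_smul]
              refine Finset.sum_congr rfl fun s _ => ?_
              rw [mul_comm, mul_smul]
          _ = ∑ s, ((c s : Fin n → F) i) • (∑ t, e.repr (a * e s) t • e t) := by
              rw [Finset.sum_comm]
              exact Finset.sum_congr rfl fun s _ => (Finset.smul_sum).symm
          _ = ∑ s, ((c s : Fin n → F) i) • (a * e s) := by
              refine Finset.sum_congr rfl fun s _ => ?_
              rw [Module.Basis.sum_repr]
          _ = a * ∑ s, ((c s : Fin n → F) i) • e s := by
              rw [Finset.mul_sum]
              exact Finset.sum_congr rfl fun s _ => (mul_smul_comm _ _ _).symm }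
  have hR : extCode D ≤ R := by
    rw [extCode, Submodule.span_le]
    rintro _ ⟨d, hd, rfl⟩
    refine ⟨fun t => e.repr 1 t • ⟨d, hd⟩, ?_⟩
    funext i
    simp only [psi, SetLike.val_smul, Pi.smul_apply, smul_eq_mul]
    calc ∑ t, (e.repr 1 t * d i) • e t
        = d i • ∑ t, e.repr 1 t • e t := by
          rw [Finset.smul_sum]
          exact Finset.sum_congr rfl fun t _ => by rw [mul_comm, mul_smul]
      _ = algebraMap F E (d i) := by rw [Module.Basis.sum_repr, Algebra.algebraMap_eq_smul_one]
  exact hR hx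

lemma card_fiber [Fintype F] (e : Module.Basis (Fin m) F E) (C : Submodule F (Fin n → F))
    (S : Finset (Fin n)) :
    Nat.card {x : Fin n → E // x ∈ extCode C ∧ ∀ i ∉ S, x i = 0} =
      Fintype.card F ^ (Module.finrank F ↥(C ⊓ zeroOutside F n S) * m) := by
  set D := C ⊓ zeroOutside F n S with hD
  have hmono : extCode (E := E) D ≤ extCode C := by
    rw [extCode, Submodule.span_le]
    rintro _ ⟨x', hx', rfl⟩
    exact Submodule.subset_span ⟨x', hx'.1, rfl⟩
  let f : (Fin m → D) → {x : Fin n → E // x ∈ extCode C ∧ ∀ i ∉ S, x i = 0} :=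
    fun c => ⟨psi e D c, hmono (psi_mem e D c),
      fun i hi => (psi_apply_eq_zero_iff e D c i).mpr
        (fun t => (Submodule.mem_inf.mp (c t).2).2 i hi)⟩
  have hbij : Function.Bijective f := by
    constructor
    · intro c c' h
      exact psi_inj e D (congrArg Subtype.val h)
    · rintro ⟨x, hx, hsupp⟩
      obtain ⟨c, rfl⟩ := exists_psi e C hx
      refine ⟨fun t => ⟨(c t : Fin n → F), Submodule.mem_inf.mpr ⟨(c t).2,
        fun i hi => (psi_apply_eq_zero_iff e C c i).mp (hsupp i hi) t⟩⟩, ?_⟩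
      ext i
      rfl
  haveI : Fintype D := Fintype.ofFinite _
  rw [← Nat.card_eq_of_bijective f hbij, Nat.card_eq_fintype_card, Fintype.card_fun,
    Module.card_eq_pow_finrank (K := F) (V := D), ← pow_mul, Fintype.card_fin]

end Aux

open Finset in
lemma card_supersets {n : ℕ} (A : Finset (Fin n)) (r : ℕ) :
    Nat.card {S : Finset (Fin n) // S.card = r ∧ A ⊆ S} =
      if A.card ≤ r then (n - A.card).choose (r - A.card) else 0 := by
  split_ifs with h
  · have e : {S : Finset (Fin n) // S.card = r ∧ A ⊆ S} ≃
        {B : Finset (Fin n) // B ∈ Finset.powersetCard (r - A.card) Aᶜ} := by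
      refine ⟨fun S => ⟨S.1 \ A, ?_⟩, fun B => ⟨B.1 ∪ A, ?_⟩, ?_, ?_⟩
      · rw [Finset.mem_powersetCard]
        refine ⟨fun i hi => ?_, by rw [Finset.card_sdiff_of_subset S.2.2, S.2.1]⟩
        rw [Finset.mem_compl]
        exact (Finset.mem_sdiff.mp hi).2
      · obtain ⟨hB, hcard⟩ := Finset.mem_powersetCard.mp B.2
        have hdisj : Disjoint B.1 A := by
          rw [Finset.disjoint_right]
          intro i hiA hiB
          exact (Finset.mem_compl.mp (hB hiB)) hiA
        constructor
        · rw [Finset.card_union_of_disjoint hdisj, hcard]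
          omega
        · exact Finset.subset_union_right
      · rintro ⟨S, hS, hAS⟩
        ext : 1
        exact Finset.sdiff_union_of_subset hAS
      · rintro ⟨B, hB⟩
        obtain ⟨hBc, _⟩ := Finset.mem_powersetCard.mp hB
        ext : 1
        simp only
        rw [Finset.union_sdiff_right]
        exact Finset.sdiff_eq_self_of_disjoint (Finset.disjoint_right.mpr
          fun i hiA hiB => (Finset.mem_compl.mp (hBc hiB)) hiA)
    rw [Nat.card_congr e, Nat.card_eq_fintype_card, Fintype.card_coe, Finset.card_powersetCard,
      Finset.card_compl, Fintype.card_fin]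
  · rw [Nat.card_eq_zero]
    left
    constructor
    rintro ⟨S, hS, hAS⟩
    exact h (hS ▸ Finset.card_le_card hAS)

open Finset in
theorem stmt18 {F E : Type*} [Field F] [Fintype F] [Field E] [Algebra F E]
    {n k m r : ℕ} (hm : 1 ≤ m) (hE : Module.finrank F E = m)
    (C : Submodule F (Fin n → F)) (hC : Module.finrank F C = k) (hr : r ≤ n) :
    ∑ j ∈ Finset.range (k + 1), Fintype.card F ^ (j * m) *
        Nat.card {S : Finset (Fin n) // S.card = r ∧
          Module.finrank F ↥(C ⊓ zeroOutside F n S) = j} =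
      ∑ ℓ ∈ Finset.range (n + 1),
        (if ℓ ≤ r then (n - ℓ).choose (r - ℓ) else 0) *
          Nat.card {x : Fin n → E // x ∈ extCode C ∧ hamWt x = ℓ} := by
  classical
  haveI : FiniteDimensional F E := FiniteDimensional.of_finrank_pos (by omega)
  haveI : Finite E := Module.finite_of_finite F
  haveI : Fintype E := Fintype.ofFinite E
  let e : Module.Basis (Fin m) F E := (Module.finBasis F E).reindex (finCongr hE)
  set q := Fintype.card F with hq
  -- the double-counted set
  let T1 := {p : Finset (Fin n) × (Fin n → E) //
    (p.2 ∈ extCode C ∧ ∀ i ∉ p.1, p.2 i = 0) ∧ p.1.card = r}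
  let T2 := {p : (Fin n → E) × Finset (Fin n) //
    (p.1 ∈ extCode C ∧ ∀ i ∉ p.2, p.1 i = 0) ∧ p.2.card = r}
  have hT : Fintype.card T1 = Fintype.card T2 := by
    refine Fintype.card_congr ((Equiv.prodComm _ _).subtypeEquiv ?_)
    intro p
    rfl
  -- LHS
  have hL : (∑ j ∈ Finset.range (k + 1), q ^ (j * m) *
      Nat.card {S : Finset (Fin n) // S.card = r ∧
        Module.finrank F ↥(C ⊓ zeroOutside F n S) = j}) = Fintype.card T1 := by
    rw [Fintype.card_congr (Equiv.subtypeProdEquivSigmaSubtype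
      (fun (S : Finset (Fin n)) (x : Fin n → E) =>
        (x ∈ extCode C ∧ ∀ i ∉ S, x i = 0) ∧ S.card = r)), Fintype.card_sigma]
    have h1 : ∀ S : Finset (Fin n),
        Fintype.card {x : Fin n → E // (x ∈ extCode C ∧ ∀ i ∉ S, x i = 0) ∧ S.card = r} =
          if S.card = r then q ^ (Module.finrank F ↥(C ⊓ zeroOutside F n S) * m) else 0 := by
      intro S
      split_ifs with h
      · simp only [h, and_true]
        rw [← Nat.card_eq_fintype_card, card_fiber e C S]
      · rw [Fintype.card_eq_zero_iff]
        exact ⟨fun x => h x.2.2⟩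
    rw [Finset.sum_congr rfl (fun S _ => h1 S), ← Finset.sum_filter]
    have hmaps : ∀ S ∈ univ.filter (fun S : Finset (Fin n) => S.card = r),
        Module.finrank F ↥(C ⊓ zeroOutside F n S) ∈ Finset.range (k + 1) := by
      intro S _
      rw [Finset.mem_range, Nat.lt_succ_iff, ← hC]
      exact Submodule.finrank_mono inf_le_left
    rw [← Finset.sum_fiberwise_of_maps_to hmaps
      (fun S => q ^ (Module.finrank F ↥(C ⊓ zeroOutside F n S) * m))]
    refine Finset.sum_congr rfl fun j _ => ?_
    rw [Finset.sum_congr rfl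
      (fun S hS => by rw [(Finset.mem_filter.mp hS).2]), Finset.sum_const, smul_eq_mul,
      Finset.filter_filter, mul_comm]
    congr 1
    rw [Nat.card_eq_fintype_card, Fintype.card_subtype]
  -- RHS
  have hR : (∑ ℓ ∈ Finset.range (n + 1),
      (if ℓ ≤ r then (n - ℓ).choose (r - ℓ) else 0) *
        Nat.card {x : Fin n → E // x ∈ extCode C ∧ hamWt x = ℓ}) = Fintype.card T2 := by
    rw [Fintype.card_congr (Equiv.subtypeProdEquivSigmaSubtype
      (fun (x : Fin n → E) (S : Finset (Fin n)) =>
        (x ∈ extCode C ∧ ∀ i ∉ S, x i = 0) ∧ S.card = r)), Fintype.card_sigma]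
    have h2 : ∀ x : Fin n → E,
        Fintype.card {S : Finset (Fin n) // (x ∈ extCode C ∧ ∀ i ∉ S, x i = 0) ∧ S.card = r} =
          if x ∈ extCode C then
            (if hamWt x ≤ r then (n - hamWt x).choose (r - hamWt x) else 0) else 0 := by
      intro x
      by_cases h : x ∈ extCode C
      · rw [if_pos h]
        set A : Finset (Fin n) := univ.filter (fun i => x i ≠ 0) with hA
        have hAcard : A.card = hamWt x := by
          rw [hamWt, Nat.card_eq_fintype_card, Fintype.card_subtype]
        have hequiv : {S : Finset (Fin n) // (x ∈ extCode C ∧ ∀ i ∉ S, x i = 0) ∧ S.card = r} ≃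
            {S : Finset (Fin n) // S.card = r ∧ A ⊆ S} := by
          refine Equiv.subtypeEquivRight fun S => ?_
          constructor
          · rintro ⟨⟨_, hsupp⟩, hcard⟩
            refine ⟨hcard, fun i hi => ?_⟩
            by_contra hiS
            exact (Finset.mem_filter.mp hi).2 (hsupp i hiS)
          · rintro ⟨hcard, hsub⟩
            refine ⟨⟨h, fun i hi => ?_⟩, hcard⟩
            by_contra hxi
            exact hi (hsub (Finset.mem_filter.mpr ⟨Finset.mem_univ i, hxi⟩))
        rw [← Nat.card_eq_fintype_card, Nat.card_congr hequiv, card_supersets, hAcard]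
      · rw [if_neg h, Fintype.card_eq_zero_iff]
        exact ⟨fun S => (h S.2.1.1).elim⟩
    rw [Finset.sum_congr rfl (fun x _ => h2 x), ← Finset.sum_filter]
    have hmaps : ∀ x ∈ univ.filter (fun x : Fin n → E => x ∈ extCode C),
        hamWt x ∈ Finset.range (n + 1) := by
      intro x _
      rw [Finset.mem_range, Nat.lt_succ_iff, hamWt, Nat.card_eq_fintype_card]
      exact (Fintype.card_subtype_le _).trans_eq (Fintype.card_fin n)
    rw [← Finset.sum_fiberwise_of_maps_to hmaps
      (fun x => if hamWt x ≤ r then (n - hamWt x).choose (r - hamWt x) else 0)]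
    refine Finset.sum_congr rfl fun ℓ _ => ?_
    rw [Finset.sum_congr rfl
      (fun x hx => by rw [(Finset.mem_filter.mp hx).2]), Finset.sum_const, smul_eq_mul,
      Finset.filter_filter, mul_comm]
    congr 1
    rw [Nat.card_eq_fintype_card, Fintype.card_subtype]
  rw [hL, hR, hT]
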